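/- Let G be a strongly connected digraph, s a vertex, and G(s) the flow graph with start s. If (u,v) is a strong bridge of G that is not a bridge of G(s), then (v,u) appears as a bridge in the reverse flow graph obtained from the first-level auxiliary graph containing u and v; in particular, every strong bridge of G is either a bridge of G(s) or the reverse of a bridge of G^R(s). -/

import Mathlib

variable {V : Type*}

/-- A walk in a digraph given by its edge set `E`, recorded as a list of edges. -/
inductive IsWalk (E : Set (V × V)) : V → V → List (V × V) → Prop
  | nil (u : V) : IsWalk E u u []
  | cons {u v w : V} {p : List (V × V)} (h : (u, v) ∈ E) (hp : IsWalk E v w p) :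
      IsWalk E u w ((u, v) :: p)

def Reaches (E : Set (V × V)) (u v : V) : Prop := ∃ p, IsWalk E u v p

def StronglyConnected (E : Set (V × V)) : Prop := ∀ u v : V, Reaches E u v

/-- Two edge-disjoint directed paths from `u` to `v`. -/
def TwoEDP (E : Set (V × V)) (u v : V) : Prop :=
  ∃ p q, IsWalk E u v p ∧ IsWalk E u v q ∧ p.Disjoint q

/-- `u` and `v` are 2-edge-connected. -/
def TwoEC (E : Set (V × V)) (u v : V) : Prop := TwoEDP E u v ∧ TwoEDP E v u

/-- A 2-edge-connected block: a maximal set of pairwise 2-edge-connected vertices. -/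
def Is2ECBlock (E : Set (V × V)) (B : Set V) : Prop :=
  (∀ u ∈ B, ∀ v ∈ B, TwoEC E u v) ∧
    ∀ C : Set V, B ⊆ C → (∀ u ∈ C, ∀ v ∈ C, TwoEC E u v) → C = B

def SameBlocks (E E' : Set (V × V)) : Prop :=
  ∀ B : Set V, Is2ECBlock E B ↔ Is2ECBlock E' B

/-- A strong bridge: an edge whose removal increases the number of strongly
connected components, i.e. destroys the mutual reachability of some pair. -/
def IsStrongBridge (E : Set (V × V)) (e : V × V) : Prop :=
  e ∈ E ∧ ∃ u v : V, (Reaches E u v ∧ Reaches E v u) ∧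
    ¬ (Reaches (E \ {e}) u v ∧ Reaches (E \ {e}) v u)

/-- A 2-edge-connected digraph: strongly connected and stays so after deleting any edge. -/
def Is2ECGraph (E : Set (V × V)) : Prop :=
  StronglyConnected E ∧ ∀ e ∈ E, StronglyConnected (E \ {e})

/-- Edges of `E` induced on the vertex set `C`. -/
def restrictE (E : Set (V × V)) (C : Set V) : Set (V × V) :=
  {e ∈ E | e.1 ∈ C ∧ e.2 ∈ C}

def SCOn (E' : Set (V × V)) (C : Set V) : Prop :=
  ∀ u ∈ C, ∀ v ∈ C, Reaches E' u v

/-- `E'` is a 2-edge-connected (spanning sub)graph on the vertex set `C`. -/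
def Is2ECOn (E' : Set (V × V)) (C : Set V) : Prop :=
  SCOn E' C ∧ ∀ e ∈ E', SCOn (E' \ {e}) C

/-- A 2-edge-connected component: a maximal vertex set inducing a 2-edge-connected subgraph. -/
def Is2ECComponent (E : Set (V × V)) (C : Set V) : Prop :=
  Is2ECOn (restrictE E C) C ∧
    ∀ D : Set V, C ⊆ D → Is2ECOn (restrictE E D) D → D = C

/-- A solution to 2EC-B: a strongly connected spanning subgraph with the same
2-edge-connected blocks. -/
def IsSolutionB (E E' : Set (V × V)) : Prop :=
  E' ⊆ E ∧ StronglyConnected E' ∧ SameBlocks E' E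

/-- The reverse digraph. -/
def revE (E : Set (V × V)) : Set (V × V) := {e | (e.2, e.1) ∈ E}

/-- A bridge of the flow graph with start vertex `s`: an edge contained in every
walk from `s` to its head. -/
def IsBridge (E : Set (V × V)) (s : V) (e : V × V) : Prop :=
  e ∈ E ∧ ∀ p, IsWalk E s e.2 p → e ∈ p

/-- `u` is a vertex of the walk `p` starting at `s`. -/
def OnWalk (s : V) (p : List (V × V)) (u : V) : Prop :=
  u = s ∨ ∃ e ∈ p, e.2 = u

/-- `u` dominates `w` in the flow graph with start `s`. -/
def Dom (E : Set (V × V)) (s u w : V) : Prop :=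
  ∀ p, IsWalk E s w p → OnWalk s p u

def PDom (E : Set (V × V)) (s u w : V) : Prop := Dom E s u w ∧ u ≠ w

/-- `u` is the immediate dominator of `w`. -/
def Idom (E : Set (V × V)) (s u w : V) : Prop :=
  PDom E s u w ∧ ∀ x, PDom E s x w → Dom E s x u

/-- Marked vertices: roots of the trees of the canonical decomposition of the
dominator tree, i.e. `s` and the heads of bridges of `G(s)`. -/
def Marked (E : Set (V × V)) (s r : V) : Prop :=
  r = s ∨ ∃ e, IsBridge E s e ∧ e.2 = r

/-- `w` belongs to the tree `T(r)` of the canonical decomposition: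
`r` is the nearest marked dominator of `w`. -/
def InTree (E : Set (V × V)) (s r w : V) : Prop :=
  Marked E s r ∧ Dom E s r w ∧ ∀ x, Marked E s x → Dom E s x w → Dom E s x r

/-- A spanning tree of the flow graph `G(s)` rooted at `s`. -/
def IsSpanningTree (E : Set (V × V)) (s : V) (T : Set (V × V)) : Prop :=
  T ⊆ E ∧ (∀ v, Reaches T s v) ∧ (∀ v, v ≠ s → ∃! e, e ∈ T ∧ e.2 = v) ∧
    ∀ e ∈ T, e.2 ≠ s

/-- Two independent spanning trees: for every `v`, the two tree paths from `s`
to `v` share only dominators of `v`. -/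
def IndependentTrees (E : Set (V × V)) (s : V) (T₁ T₂ : Set (V × V)) : Prop :=
  IsSpanningTree E s T₁ ∧ IsSpanningTree E s T₂ ∧
    ∀ v p q, IsWalk T₁ s v p → IsWalk T₂ s v q →
      ∀ u, OnWalk s p u → OnWalk s q u → Dom E s u v

/-- The contraction map defining the first-level auxiliary graph `G_r`:
vertices of `T(r)` stay put, descendants of a marked child `x` of a boundary
vertex of `T(r)` are contracted into `x`, and non-descendants of `r` are
contracted into `d(r)`. -/
def ContractsTo (E : Set (V × V)) (s r v x : V) : Prop :=
  (InTree E s r v ∧ x = v) ∨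
  (Dom E s r v ∧ ¬ InTree E s r v ∧ Marked E s x ∧ Dom E s x v ∧
    ∃ u, InTree E s r u ∧ Idom E s u x) ∨
  (¬ Dom E s r v ∧ Idom E s x r)

/-- The edge set of the first-level auxiliary graph `G_r`. -/
def AuxE (E : Set (V × V)) (s r : V) : Set (V × V) :=
  {e | ∃ a b, (a, b) ∈ E ∧ ContractsTo E s r a e.1 ∧ ContractsTo E s r b e.2}

def cutEdges (E : Set (V × V)) (U W : Set V) : Set (V × V) :=
  {e ∈ E | e.1 ∈ U ∧ e.2 ∈ W}

def IsCut (u w : V) (U W : Set V) : Prop := u ∈ U ∧ w ∈ W ∧ Disjoint U W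

def IsMinCut (E : Set (V × V)) (u w : V) (U W : Set V) : Prop :=
  IsCut u w U W ∧ ∀ U' W' : Set V, IsCut u w U' W' →
    (cutEdges E U W).ncard ≤ (cutEdges E U' W').ncard

/-- There exist `k` pairwise edge-disjoint walks from `u` to `w`. -/
def HasEDP (E : Set (V × V)) (u w : V) (k : ℕ) : Prop :=
  ∃ P : Fin k → List (V × V), (∀ i, IsWalk E u w (P i)) ∧
    ∀ i j, i ≠ j → (P i).Disjoint (P j)

/-- The (loop-free, simple) quotient of the inter-component edges `F` under the
component map `h`. -/
def quotE {V' : Type*} (h : V → V') (F : Set (V × V)) : Set (V' × V') :=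
  {q | ∃ e ∈ F, h e.1 = q.1 ∧ h e.2 = q.2 ∧ q.1 ≠ q.2}

/-- A solution to 2EC-C: a strongly connected spanning subgraph with the same
2-edge-connected components. -/
def IsSolutionC (E E' : Set (V × V)) : Prop :=
  E' ⊆ E ∧ StronglyConnected E' ∧
    ∀ C : Set V, Is2ECComponent E C ↔ Is2ECComponent E' C

/-- One step of the deletion process: delete an edge `(x,y)` such that two
edge-disjoint `x → y` paths remain. -/
def DelStep (E₁ E₂ : Set (V × V)) : Prop :=
  ∃ x y : V, (x, y) ∈ E₁ ∧ E₂ = E₁ \ {(x, y)} ∧ TwoEDP E₂ x y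



section StrongBridgeHelpers

variable {V : Type*}

lemma isWalk_append {E : Set (V × V)} {a b c : V} {p q : List (V × V)}
    (h1 : IsWalk E a b p) (h2 : IsWalk E b c q) : IsWalk E a c (p ++ q) := by
  induction h1 with
  | nil => simpa using h2
  | cons h hp ih => exact IsWalk.cons h (ih h2)

lemma isWalk_mem {E : Set (V × V)} {a b : V} {p : List (V × V)}
    (h : IsWalk E a b p) : ∀ e ∈ p, e ∈ E := by
  induction h with
  | nil => simp
  | cons h hp ih =>
    intro e he
    rcases List.mem_cons.1 he with h' | h'
    · subst h'; exact h
    · exact ih e h'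

lemma isWalk_mono {E F : Set (V × V)} (hEF : E ⊆ F) {a b : V} {p : List (V × V)}
    (h : IsWalk E a b p) : IsWalk F a b p := by
  induction h with
  | nil => exact IsWalk.nil _
  | cons h hp ih => exact IsWalk.cons (hEF h) ih

lemma isWalk_diff {E : Set (V × V)} {e : V × V} {a b : V} {p : List (V × V)}
    (h : IsWalk E a b p) (he : e ∉ p) : IsWalk (E \ {e}) a b p := by
  induction h with
  | nil => exact IsWalk.nil _
  | @cons x y w q hxy hq ih =>
    refine IsWalk.cons ⟨hxy, ?_⟩ (ih (fun hh => he (List.mem_cons_of_mem _ hh)))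
    intro hh
    simp only [Set.mem_singleton_iff] at hh
    exact he (hh ▸ List.mem_cons_self)

lemma reaches_refl (E : Set (V × V)) (a : V) : Reaches E a a := ⟨[], IsWalk.nil a⟩

lemma Reaches.trans {E : Set (V × V)} {a b c : V} (h1 : Reaches E a b) (h2 : Reaches E b c) :
    Reaches E a c := by
  obtain ⟨p, hp⟩ := h1; obtain ⟨q, hq⟩ := h2
  exact ⟨p ++ q, isWalk_append hp hq⟩

lemma reaches_single {E : Set (V × V)} {a b : V} (h : (a, b) ∈ E) : Reaches E a b :=
  ⟨[(a, b)], IsWalk.cons h (IsWalk.nil b)⟩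

lemma reaches_splice {E : Set (V × V)} {e : V × V} (hd : Reaches (E \ {e}) e.1 e.2) :
    ∀ {a b : V} {p : List (V × V)}, IsWalk E a b p → Reaches (E \ {e}) a b := by
  intro a b p h
  induction h with
  | nil => exact reaches_refl _ _
  | @cons x y w q hxy hq ih =>
    by_cases hxe : (x, y) = e
    · exact ((hxe ▸ hd : Reaches (E \ {e}) x y)).trans ih
    · exact (reaches_single (⟨hxy, by simpa using hxe⟩ : (x, y) ∈ E \ {e})).trans ih

lemma walk_split_first {E : Set (V × V)} {a b : V} {p : List (V × V)} {e : V × V}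
    (h : IsWalk E a b p) (he : e ∈ p) :
    ∃ p₁ p₂, p = p₁ ++ e :: p₂ ∧ IsWalk E a e.1 p₁ ∧ IsWalk E e.2 b p₂ ∧ e ∉ p₁ := by
  induction h with
  | nil => simp at he
  | @cons x y w q hxy hq ih =>
    by_cases h1 : e = (x, y)
    · subst h1
      exact ⟨[], q, rfl, IsWalk.nil x, hq, by simp⟩
    · have he' : e ∈ q := by
        rcases List.mem_cons.1 he with h' | h'
        · exact absurd h' h1
        · exact h'
      obtain ⟨p₁, p₂, hpe, hw1, hw2, hne⟩ := ih he'
      refine ⟨(x, y) :: p₁, p₂, by rw [hpe]; rfl, IsWalk.cons hxy hw1, hw2, ?_⟩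
      intro hc
      rcases List.mem_cons.1 hc with h' | h'
      · exact h1 h'
      · exact hne h'

lemma walk_split_last {E : Set (V × V)} {a b : V} {p : List (V × V)} {e : V × V}
    (h : IsWalk E a b p) (he : e ∈ p) :
    ∃ p₁ p₂, p = p₁ ++ e :: p₂ ∧ IsWalk E a e.1 p₁ ∧ IsWalk E e.2 b p₂ ∧ e ∉ p₂ := by
  induction h with
  | nil => simp at he
  | @cons x y w q hxy hq ih =>
    by_cases h1 : e ∈ q
    · obtain ⟨p₁, p₂, hpe, hw1, hw2, hne⟩ := ih h1
      exact ⟨(x, y) :: p₁, p₂, by rw [hpe]; rfl, IsWalk.cons hxy hw1, hw2, hne⟩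
    · have h2 : e = (x, y) := by
        rcases List.mem_cons.1 he with h' | h'
        · exact h'
        · exact absurd h' h1
      subst h2
      exact ⟨[], q, rfl, IsWalk.nil x, hq, h1⟩

/-- walk from `a` to the head of an occurrence of `e` on the walk. -/
lemma walk_to_head {E : Set (V × V)} {a b : V} {p : List (V × V)} {e : V × V}
    (h : IsWalk E a b p) (he : e ∈ p) :
    ∃ q, IsWalk E a e.2 q ∧ ∀ f ∈ q, f ∈ p := by
  obtain ⟨p₁, p₂, hpe, hw1, hw2, -⟩ := walk_split_first h he
  have hin : e ∈ E := isWalk_mem h e he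
  refine ⟨p₁ ++ [e], isWalk_append hw1 ?_, ?_⟩
  · exact (IsWalk.cons (show (e.1, e.2) ∈ E by simpa using hin) (IsWalk.nil e.2))
  · intro f hf
    rcases List.mem_append.1 hf with h' | h'
    · rw [hpe]; exact List.mem_append.2 (Or.inl h')
    · simp only [List.mem_singleton] at h'
      subst h'
      rw [hpe]; exact List.mem_append.2 (Or.inr (List.mem_cons_self))

/-- walk from the head of an occurrence of `e` to the end of the walk. -/
lemma walk_from_head {E : Set (V × V)} {a b : V} {p : List (V × V)} {e : V × V}
    (h : IsWalk E a b p) (he : e ∈ p) :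
    ∃ q, IsWalk E e.2 b q ∧ ∀ f ∈ q, f ∈ p := by
  obtain ⟨p₁, p₂, hpe, hw1, hw2, -⟩ := walk_split_first h he
  refine ⟨p₂, hw2, fun f hf => ?_⟩
  rw [hpe]; exact List.mem_append.2 (Or.inr (List.mem_cons_of_mem _ hf))

/-- suffix after the last occurrence of `e`, avoiding `e`. -/
lemma walk_suffix_avoid {E : Set (V × V)} {a b : V} {p : List (V × V)} {e : V × V}
    (h : IsWalk E a b p) (he : e ∈ p) :
    Reaches (E \ {e}) e.2 b := by
  obtain ⟨p₁, p₂, hpe, hw1, hw2, hne⟩ := walk_split_last h he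
  exact ⟨p₂, isWalk_diff hw2 hne⟩

/-- prefix before the first occurrence of `e`, avoiding `e`. -/
lemma walk_prefix_avoid {E : Set (V × V)} {a b : V} {p : List (V × V)} {e : V × V}
    (h : IsWalk E a b p) (he : e ∈ p) :
    Reaches (E \ {e}) a e.1 := by
  obtain ⟨p₁, p₂, hpe, hw1, hw2, hne⟩ := walk_split_first h he
  exact ⟨p₁, isWalk_diff hw1 hne⟩

lemma walk_end_onWalk {E : Set (V × V)} {a b : V} {p : List (V × V)}
    (h : IsWalk E a b p) : OnWalk a p b := by
  induction h with
  | nil => exact Or.inl rfl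
  | @cons x y w q hxy hq ih =>
    rcases ih with h' | ⟨e, he, he2⟩
    · exact Or.inr ⟨(x, y), List.mem_cons_self, h'.symm⟩
    · exact Or.inr ⟨e, List.mem_cons_of_mem _ he, he2⟩

lemma dom_self {E : Set (V × V)} {s m : V} : Dom E s m m := fun _ hp => walk_end_onWalk hp

lemma dom_trans {E : Set (V × V)} {s a b c : V} (h1 : Dom E s a b) (h2 : Dom E s b c) :
    Dom E s a c := by
  intro p hp
  rcases h2 p hp with hb | ⟨e, he, he2⟩
  · -- b = s
    rcases h1 [] (by rw [hb]; exact IsWalk.nil s) with ha | ⟨f, hf, -⟩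
    · exact Or.inl ha
    · simp at hf
  · obtain ⟨q, hq, hqp⟩ := walk_to_head hp he
    rcases h1 q (he2 ▸ hq) with ha | ⟨f, hf, hf2⟩
    · exact Or.inl ha
    · exact Or.inr ⟨f, hqp f hf, hf2⟩

lemma dom_antisymm {E : Set (V × V)} {s a b : V} (hr : Reaches E s a)
    (hab : Dom E s a b) (hba : Dom E s b a) : a = b := by
  by_contra hne
  have key : ∀ n (p : List (V × V)), p.length ≤ n → IsWalk E s a p → False := by
    intro n
    induction n with
    | zero =>
      intro p hlen hw
      have hp0 : p = [] := List.eq_nil_of_length_eq_zero (Nat.le_zero.1 hlen)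
      subst hp0
      cases hw
      rcases hba [] (IsWalk.nil s) with h | ⟨f, hf, -⟩
      · exact hne h.symm
      · simp at hf
    | succ n ih =>
      intro p hlen hw
      rcases hba p hw with hb | ⟨e, he, he2⟩
      · -- b = s
        rcases hab [] (by rw [hb]; exact IsWalk.nil s) with ha | ⟨f, hf, -⟩
        · exact hne (ha.trans hb.symm)
        · simp at hf
      · obtain ⟨p₁, p₂, hpe, hw1, -, -⟩ := walk_split_first hw he
        have hq : IsWalk E s b (p₁ ++ [e]) := by
          refine isWalk_append hw1 ?_
          have hin : e ∈ E := isWalk_mem hw e he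
          exact he2 ▸ (IsWalk.cons (show (e.1, e.2) ∈ E by simpa using hin) (IsWalk.nil e.2))
        rcases hab _ hq with ha | ⟨f, hf, hf2⟩
        · -- a = s
          subst ha
          rcases hba [] (IsWalk.nil a) with h | ⟨g, hg, -⟩
          · exact hne h.symm
          · simp at hg
        · rcases List.mem_append.1 hf with hf1 | hf1
          · obtain ⟨q₁, q₂, hq1e, hwq1, -, -⟩ := walk_split_first hw1 hf1
            have hqa : IsWalk E s a (q₁ ++ [f]) := by
              refine isWalk_append hwq1 ?_
              have hin : f ∈ E := isWalk_mem hw1 f hf1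
              exact hf2 ▸ (IsWalk.cons (show (f.1, f.2) ∈ E by simpa using hin) (IsWalk.nil f.2))
            refine ih (q₁ ++ [f]) ?_ hqa
            have h1 : q₁.length + 1 ≤ p₁.length := by
              rw [hq1e]; simp only [List.length_append, List.length_cons]; omega
            have h2 : p₁.length + 1 ≤ p.length := by
              rw [hpe]; simp only [List.length_append, List.length_cons]; omega
            simp only [List.length_append, List.length_singleton]
            omega
          · simp only [List.mem_singleton] at hf1
            subst hf1
            exact hne (hf2.symm.trans he2)
  obtain ⟨p, hp⟩ := hr
  exact key p.length p le_rfl hp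

lemma rev_walk {F : Set (V × V)} {a b : V} {p : List (V × V)}
    (h : IsWalk (revE F) a b p) : ∃ q, IsWalk F b a q ∧ ∀ e ∈ q, Prod.swap e ∈ p := by
  induction h with
  | nil => exact ⟨[], IsWalk.nil _, by simp⟩
  | @cons x y w q hxy hq ih =>
    obtain ⟨q', hq', hmem⟩ := ih
    have hyx : (y, x) ∈ F := hxy
    refine ⟨q' ++ [(y, x)], isWalk_append hq' (IsWalk.cons hyx (IsWalk.nil x)), ?_⟩
    intro e he
    rcases List.mem_append.1 he with h' | h'
    · exact List.mem_cons_of_mem _ (hmem e h')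
    · simp only [List.mem_singleton] at h'
      subst h'
      exact List.mem_cons_self

end StrongBridgeHelpers

theorem stmt4 (E : Set (V × V)) (s u v : V)
    (hSC : StronglyConnected E)
    (hsb : IsStrongBridge E (u, v))
    (hnb : ¬ IsBridge E s (u, v)) :
    (∀ r : V, InTree E s r u → InTree E s r v →
      IsBridge (revE (AuxE E s r)) r (v, u)) ∧
    (∀ a b : V, IsStrongBridge E (a, b) →
      IsBridge E s (a, b) ∨ IsBridge (revE E) s (b, a)) := by
  classical
  have part2 : ∀ a b : V, IsStrongBridge E (a, b) →
      IsBridge E s (a, b) ∨ IsBridge (revE E) s (b, a) := by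
    intro a b hsb'
    by_cases hb : IsBridge E s (a, b)
    · exact Or.inl hb
    right
    have hK : ¬ Reaches (E \ {(a, b)}) a b := by
      intro hre
      obtain ⟨x, y, hxy, hnxy⟩ := hsb'.2
      obtain ⟨p1, hp1⟩ := hxy.1
      obtain ⟨p2, hp2⟩ := hxy.2
      exact hnxy ⟨reaches_splice hre hp1, reaches_splice hre hp2⟩
    have hsb2 : Reaches (E \ {(a, b)}) s b := by
      simp only [IsBridge, not_and] at hb
      have h2 := hb hsb'.1
      push_neg at h2
      obtain ⟨p, hp, hm⟩ := h2
      exact ⟨p, isWalk_diff hp hm⟩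
    refine ⟨hsb'.1, ?_⟩
    intro p hp
    by_contra hne
    obtain ⟨q, hq, hqm⟩ := rev_walk hp
    have hmem : (a, b) ∉ q := fun hc => hne (by simpa using hqm _ hc)
    exact hK (Reaches.trans ⟨q, isWalk_diff hq hmem⟩ hsb2)
  have huvE : (u, v) ∈ E := hsb.1
  have hK : ¬ Reaches (E \ {(u, v)}) u v := by
    intro hre
    obtain ⟨x, y, hxy, hnxy⟩ := hsb.2
    obtain ⟨p1, hp1⟩ := hxy.1
    obtain ⟨p2, hp2⟩ := hxy.2
    exact hnxy ⟨reaches_splice hre hp1, reaches_splice hre hp2⟩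
  have hsv : Reaches (E \ {(u, v)}) s v := by
    simp only [IsBridge, not_and] at hnb
    have h2 := hnb huvE
    push_neg at h2
    obtain ⟨p, hp, hm⟩ := h2
    exact ⟨p, isWalk_diff hp hm⟩
  have hvs : Reaches (E \ {(u, v)}) v s := by
    obtain ⟨p, hp⟩ := hSC v s
    by_cases hm : (u, v) ∈ p
    · exact walk_suffix_avoid hp hm
    · exact ⟨p, isWalk_diff hp hm⟩
  have hs_all : ∀ t, Reaches (E \ {(u, v)}) s t := by
    intro t
    obtain ⟨p, hp⟩ := hSC s t
    by_cases hm : (u, v) ∈ p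
    · exact hsv.trans (walk_suffix_avoid hp hm)
    · exact ⟨p, isWalk_diff hp hm⟩
  have hUu : ∀ c, ¬ Reaches (E \ {(u, v)}) c s → Reaches (E \ {(u, v)}) c u := by
    intro c hc
    obtain ⟨p, hp⟩ := hSC c s
    by_cases hm : (u, v) ∈ p
    · exact walk_prefix_avoid hp hm
    · exact absurd ⟨p, isWalk_diff hp hm⟩ hc
  have hanti : ∀ a b : V, Dom E s a b → Dom E s b a → a = b :=
    fun a b h1 h2 => dom_antisymm (hSC s a) h1 h2
  refine ⟨?_, part2⟩
  intro r hIu hIv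
  have hDru : Dom E s r u := hIu.2.1
  have hDrv : Dom E s r v := hIv.2.1
  have hrv : Reaches (E \ {(u, v)}) r v := by
    obtain ⟨p, hp⟩ := hsv
    rcases hDrv p (isWalk_mono Set.diff_subset hp) with h | ⟨e, he, he2⟩
    · rw [h]; exact ⟨p, hp⟩
    · obtain ⟨q, hq, -⟩ := walk_from_head hp he
      exact ⟨q, by rw [← he2]; exact hq⟩
  have hrs : Reaches (E \ {(u, v)}) r s := hrv.trans hvs
  have hMroot : ∀ m, Marked E s m → InTree E s r m → m = r := by
    intro m hm him
    exact hanti m r (him.2.2 m hm dom_self) him.2.1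
  have hnoW : ∀ w₀, InTree E s r w₀ → Idom E s w₀ r → False := by
    intro w hw hid
    exact hid.1.2 (hanti w r hid.1.1 hw.2.1)
  have hPreR : ∀ c, ContractsTo E s r c r → c = r := by
    intro c hc
    rcases hc with ⟨hi, hx⟩ | ⟨-, -, -, -, w, hw, hid⟩ | ⟨-, hid⟩
    · exact hx.symm
    · exact (hnoW w hw hid).elim
    · exact (hid.1.2 rfl).elim
  have hCTuEq : ∀ x, ContractsTo E s r u x → x = u := by
    intro x hx
    rcases hx with ⟨-, h⟩ | ⟨-, hni, -⟩ | ⟨hnd, -⟩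
    · exact h
    · exact absurd hIu hni
    · exact absurd hDru hnd
  have hCTvEq : ∀ x, ContractsTo E s r v x → x = v := by
    intro x hx
    rcases hx with ⟨-, h⟩ | ⟨-, hni, -⟩ | ⟨hnd, -⟩
    · exact h
    · exact absurd hIv hni
    · exact absurd hDrv hnd
  have hT3 : ∀ c, Reaches (E \ {(u, v)}) u c → ¬ Reaches (E \ {(u, v)}) c s →
      Dom E s r c := by
    intro c hc hcs
    by_cases hrseq : r = s
    · intro p hp; exact Or.inl hrseq
    by_contra hnd
    unfold Dom at hnd
    push_neg at hnd
    obtain ⟨p, hp, hnr⟩ := hnd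
    have hWuv : (u, v) ∉ p := by
      intro hm
      obtain ⟨q, hq, hqp⟩ := walk_to_head hp hm
      rcases hDrv q hq with h | ⟨e, he, he2⟩
      · exact hrseq h
      · exact hnr (Or.inr ⟨e, hqp e he, he2⟩)
    obtain ⟨P, hP⟩ := hUu c hcs
    have hwhole : IsWalk E s u (p ++ P) :=
      isWalk_append hp (isWalk_mono Set.diff_subset hP)
    rcases hDru _ hwhole with h | ⟨e, he, he2⟩
    · exact hrseq h
    · rcases List.mem_append.1 he with h' | h'
      · exact hnr (Or.inr ⟨e, h', he2⟩)
      · obtain ⟨q, hq, -⟩ := walk_to_head hP h'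
        exact hcs (Reaches.trans ⟨q, by rw [← he2]; exact hq⟩ hrs)
  have hstep : ∀ c a x, ContractsTo E s r c x → ContractsTo E s r a x →
      Reaches (E \ {(u, v)}) u c → ¬ Reaches (E \ {(u, v)}) c s →
      Reaches (E \ {(u, v)}) u a := by
    intro c a x hcx hax hc hcs
    rcases hcx with ⟨hic, hxc⟩ | ⟨hdrc, hnic, hmx, hdxc, w, hwI, hwid⟩ | ⟨hnd, -⟩
    · -- c is in T(r), x = c
      rw [hxc] at hax
      rcases hax with ⟨hia, hxa⟩ | ⟨-, -, hmx, -, w, hw, hid⟩ | ⟨-, hid⟩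
      · rw [← hxa]; exact hc
      · have hcr : c = r := hMroot c hmx hic
        exact absurd (by rw [hcr]; exact hrs) hcs
      · have hcr : c = r := hanti c r hid.1.1 hic.2.1
        exact absurd (by rw [hcr]; exact hrs) hcs
    · -- case 2 for c
      have hxner : x ≠ r := by
        intro h; rw [h] at hwid; exact hnoW w hwI hwid
      have hDrx : Dom E s r x := dom_trans hwI.2.1 hwid.1.1
      have hxnes : x ≠ s := by
        intro h
        rcases hwid.1.1 [] (by rw [h]; exact IsWalk.nil s) with h' | ⟨f, hf, -⟩
        · exact hwid.1.2 (h'.trans h.symm)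
        · simp at hf
      rcases hax with ⟨hia, hxa⟩ | ⟨hdra, hnia, -, hdxa, -⟩ | ⟨-, hid⟩
      · exact absurd (hMroot x hmx (by rw [hxa]; exact hia)) hxner
      · -- the main case
        have hxa' : Reaches (E \ {(u, v)}) x a := by
          obtain ⟨ra, hra⟩ := hs_all a
          rcases hdxa ra (isWalk_mono Set.diff_subset hra) with h | ⟨e, he, he2⟩
          · exact absurd h hxnes
          · obtain ⟨q, hq, -⟩ := walk_from_head hra he
            exact ⟨q, by rw [← he2]; exact hq⟩
        by_cases hall : ∀ p, IsWalk (E \ {(u, v)}) s u p → OnWalk s p x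
        · have hDxu : Dom E s x u := by
            intro p hp
            by_cases hm : (u, v) ∈ p
            · obtain ⟨p₁, p₂, hpe, hw1, -, hne1⟩ := walk_split_first hp hm
              rcases hall p₁ (isWalk_diff hw1 hne1) with h | ⟨e, he, he2⟩
              · exact Or.inl h
              · exact Or.inr ⟨e, by rw [hpe]; exact List.mem_append.2 (Or.inl he), he2⟩
            · rcases hall p (isWalk_diff hp hm) with h | ⟨e, he, he2⟩
              · exact Or.inl h
              · exact Or.inr ⟨e, he, he2⟩
          exact absurd (hanti x r (hIu.2.2 x hmx hDxu) hDrx) hxner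
        · push_neg at hall
          obtain ⟨S0, hS0, hnx⟩ := hall
          obtain ⟨Q, hQ⟩ := hc
          have hcomb : IsWalk E s c (S0 ++ Q) :=
            isWalk_append (isWalk_mono Set.diff_subset hS0)
              (isWalk_mono Set.diff_subset hQ)
          rcases hdxc _ hcomb with h | ⟨e, he, he2⟩
          · exact absurd h hxnes
          · rcases List.mem_append.1 he with h' | h'
            · exact absurd (Or.inr ⟨e, h', he2⟩) hnx
            · obtain ⟨q, hq, -⟩ := walk_to_head hQ h'
              exact Reaches.trans ⟨q, by rw [← he2]; exact hq⟩ hxa'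
      · exact absurd (hanti x r hid.1.1 hDrx) hxner
    · -- case 3 for c: impossible
      exact absurd (hT3 c hc hcs) hnd
  have hAuxStep : ∀ (p : List (V × V)) (x y : V), IsWalk (AuxE E s r) x y p →
      (u, v) ∉ p →
      (∃ c, ContractsTo E s r c x ∧ Reaches (E \ {(u, v)}) u c) →
      ∃ c, ContractsTo E s r c y ∧ Reaches (E \ {(u, v)}) u c := by
    intro p x y hw
    induction hw with
    | nil => intro _ h; exact h
    | @cons x₀ z w₀ q hedge hq ih =>
      intro hnm hex
      obtain ⟨c, hct, hcr⟩ := hex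
      obtain ⟨a, b, habE, hax, hbz⟩ := hedge
      have hedge_ne : (x₀, z) ≠ (u, v) := by
        intro h
        exact hnm (by rw [← h]; exact List.mem_cons_self)
      have hua : Reaches (E \ {(u, v)}) u a := by
        by_cases hcs : Reaches (E \ {(u, v)}) c s
        · exact hcr.trans (hcs.trans (hs_all a))
        · exact hstep c a x₀ hct hax hcr hcs
      have habne : (a, b) ≠ (u, v) := by
        intro h
        rw [Prod.mk.injEq] at h
        obtain ⟨h1, h2⟩ := h
        refine hedge_ne ?_
        rw [hCTuEq x₀ (by rw [← h1]; exact hax), hCTvEq z (by rw [← h2]; exact hbz)]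
      have hub : Reaches (E \ {(u, v)}) u b :=
        hua.trans (reaches_single ⟨habE, by simpa using habne⟩)
      exact ih (fun hh => hnm (List.mem_cons_of_mem _ hh)) ⟨b, hbz, hub⟩
  refine ⟨⟨u, v, huvE, Or.inl ⟨hIu, rfl⟩, Or.inl ⟨hIv, rfl⟩⟩, ?_⟩
  intro p hp
  by_contra hne
  obtain ⟨q, hq, hqm⟩ := rev_walk hp
  have hnuv : (u, v) ∉ q := fun hc => hne (by simpa using hqm _ hc)
  obtain ⟨c, hcr, hur⟩ :=
    hAuxStep q u r hq hnuv ⟨u, Or.inl ⟨hIu, rfl⟩, reaches_refl _ _⟩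
  have hceq : c = r := hPreR c hcr
  rw [hceq] at hur
  exact hK (hur.trans hrv)
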